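/- (Theorem 2.1) Let $S_0 = \{(x_i, y_i) : i = 0, \ldots, N\}$ be interpolation data with $x_0 < \cdots < x_N$, and let the SIFS consist of maps $\omega_{n,k}(x,y) = (L_n(x), G_{n,k}(x,y))$, $n = 1, \ldots, N$, $k = 1, \ldots, M$, where $G_{n,k}(x,y) = e_{n,k} x + \gamma_{n,k} y + f_{n,k}$ with $|\gamma_{n,k}| < 1$ and join-up conditions $G_{n,k}(x_0, y_0) = y_{n-1}$, $G_{n,k}(x_N, y_N) = y_n$. For $\sigma \in \Lambda$, let $G_{\sigma} = \lim_{k \to \infty} W_{\sigma_k} \circ \cdots \circ W_{\sigma_1}(S_0)$ be the attractor (limit in the Hausdorff metric), where $W_k(A) = \bigcup_{n=1}^N \omega_{n,k}(A)$. Then $G_{\sigma}$ is the graph of a continuous function $g_{\sigma} : I \to \mathbb{R}$ satisfying $g_{\sigma}(x_n) = y_n$ for all $n = 0, \ldots, N$. -/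

import Mathlib

open Set Metric

set_option maxHeartbeats 2000000 in
theorem stmt_9 (N M : ℕ) (hN : 1 ≤ N) (hM : 1 ≤ M)
    (x y : ℕ → ℝ) (hx : ∀ i, i < N → x i < x (i + 1))
    (a bcoef : ℕ → ℝ) (ha : ∀ n ∈ Finset.Icc 1 N, 0 < a n ∧ a n < 1)
    (L : ℕ → ℝ → ℝ) (hL : ∀ n t, L n t = a n * t + bcoef n)
    (hL0 : ∀ n ∈ Finset.Icc 1 N, L n (x 0) = x (n - 1))
    (hLN : ∀ n ∈ Finset.Icc 1 N, L n (x N) = x n)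
    (e γ f : ℕ → ℕ → ℝ)
    (hγ : ∀ n ∈ Finset.Icc 1 N, ∀ k ∈ Finset.Icc 1 M, |γ n k| < 1)
    (hjoin0 : ∀ n ∈ Finset.Icc 1 N, ∀ k ∈ Finset.Icc 1 M,
      e n k * x 0 + γ n k * y 0 + f n k = y (n - 1))
    (hjoinN : ∀ n ∈ Finset.Icc 1 N, ∀ k ∈ Finset.Icc 1 M,
      e n k * x N + γ n k * y N + f n k = y n)
    (ω : ℕ → ℕ → ℝ × ℝ → ℝ × ℝ)
    (hω : ∀ n k p, ω n k p = (L n p.1, e n k * p.1 + γ n k * p.2 + f n k))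
    (W : ℕ → Set (ℝ × ℝ) → Set (ℝ × ℝ))
    (hW : ∀ k A, W k A = ⋃ n ∈ Finset.Icc 1 N, ω n k '' A)
    (σ : ℕ → ℕ) (hσ : ∀ j, σ j ∈ Finset.Icc 1 M)
    (S : ℕ → Set (ℝ × ℝ))
    (hS0 : S 0 = {p | ∃ i ≤ N, p = (x i, y i)})
    (hSS : ∀ j, S (j + 1) = W (σ (j + 1)) (S j))
    (Gσ : Set (ℝ × ℝ)) (hGne : Gσ.Nonempty) (hGc : IsCompact Gσ)
    (hlim : Filter.Tendsto (fun k => hausdorffDist (S k) Gσ)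
      Filter.atTop (nhds 0)) :
    ∃ g : ℝ → ℝ, ContinuousOn g (Icc (x 0) (x N)) ∧
      Gσ = {p : ℝ × ℝ | p.1 ∈ Icc (x 0) (x N) ∧ p.2 = g p.1} ∧
      ∀ n ≤ N, g (x n) = y n := by
  classical
  -- monotonicity of the nodes
  have hxlt : ∀ i j : ℕ, i < j → j ≤ N → x i < x j := by
    intro i j hij hjN
    induction j with
    | zero => omega
    | succ j ih =>
      rcases Nat.lt_or_ge i j with h | h
      · exact lt_trans (ih h (by omega)) (hx j (by omega))
      · have hij' : i = j := by omega
        subst hij'; exact hx i (by omega)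
  have hxle : ∀ i j : ℕ, i ≤ j → j ≤ N → x i ≤ x j := by
    intro i j hij hjN
    rcases Nat.eq_or_lt_of_le hij with h | h
    · subst h; exact le_rfl
    · exact (hxlt i j h hjN).le
  have hxIN : x 0 < x N := hxlt 0 N (by omega) le_rfl
  have h1N : (1 : ℕ) ∈ Finset.Icc 1 N := Finset.mem_Icc.mpr ⟨le_refl 1, hN⟩
  have h1M : (1 : ℕ) ∈ Finset.Icc 1 M := Finset.mem_Icc.mpr ⟨le_refl 1, hM⟩
  have hPne : ((Finset.Icc 1 N) ×ˢ (Finset.Icc 1 M)).Nonempty :=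
    ⟨(1, 1), Finset.mem_product.mpr ⟨h1N, h1M⟩⟩
  -- bounds on coefficients
  obtain ⟨E, hE0, hEub⟩ : ∃ E : ℝ, 0 ≤ E ∧
      ∀ n ∈ Finset.Icc 1 N, ∀ k ∈ Finset.Icc 1 M, |e n k| ≤ E := by
    refine ⟨((Finset.Icc 1 N) ×ˢ (Finset.Icc 1 M)).sup' hPne (fun q => |e q.1 q.2|),
      le_trans (abs_nonneg (e 1 1)) (Finset.le_sup' (b := ((1:ℕ),(1:ℕ))) (fun q => |e q.1 q.2|) (Finset.mem_product.mpr ⟨h1N, h1M⟩)), ?_⟩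
    intro n hn k hk
    exact Finset.le_sup' (b := (n,k)) (fun q => |e q.1 q.2|) (Finset.mem_product.mpr ⟨hn, hk⟩)
  obtain ⟨F, hF0, hFub⟩ : ∃ F : ℝ, 0 ≤ F ∧
      ∀ n ∈ Finset.Icc 1 N, ∀ k ∈ Finset.Icc 1 M, |f n k| ≤ F := by
    refine ⟨((Finset.Icc 1 N) ×ˢ (Finset.Icc 1 M)).sup' hPne (fun q => |f q.1 q.2|),
      le_trans (abs_nonneg (f 1 1)) (Finset.le_sup' (b := ((1:ℕ),(1:ℕ))) (fun q => |f q.1 q.2|) (Finset.mem_product.mpr ⟨h1N, h1M⟩)), ?_⟩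
    intro n hn k hk
    exact Finset.le_sup' (b := (n,k)) (fun q => |f q.1 q.2|) (Finset.mem_product.mpr ⟨hn, hk⟩)
  obtain ⟨c, hc0, hc1, hcub⟩ : ∃ c : ℝ, 0 ≤ c ∧ c < 1 ∧
      ∀ n ∈ Finset.Icc 1 N, ∀ k ∈ Finset.Icc 1 M, |γ n k| ≤ c := by
    refine ⟨((Finset.Icc 1 N) ×ˢ (Finset.Icc 1 M)).sup' hPne (fun q => |γ q.1 q.2|),
      le_trans (abs_nonneg (γ 1 1)) (Finset.le_sup' (b := ((1:ℕ),(1:ℕ))) (fun q => |γ q.1 q.2|) (Finset.mem_product.mpr ⟨h1N, h1M⟩)), ?_, ?_⟩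
    · rw [Finset.sup'_lt_iff]
      intro b hb
      obtain ⟨hb1, hb2⟩ := Finset.mem_product.mp hb
      exact hγ b.1 hb1 b.2 hb2
    · intro n hn k hk
      exact Finset.le_sup' (b := (n,k)) (fun q => |γ q.1 q.2|) (Finset.mem_product.mpr ⟨hn, hk⟩)
  obtain ⟨amin, ham0, ham1, hamle⟩ : ∃ am : ℝ, 0 < am ∧ am < 1 ∧
      ∀ n ∈ Finset.Icc 1 N, am ≤ a n := by
    refine ⟨(Finset.Icc 1 N).inf' ⟨1, h1N⟩ a, ?_, ?_, ?_⟩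
    · apply (Finset.lt_inf'_iff ..).2
      intro b hb; exact (ha b hb).1
    · exact lt_of_le_of_lt (Finset.inf'_le a h1N) (ha 1 h1N).2
    · intro n hn; exact Finset.inf'_le a hn
  obtain ⟨amax, hA0, hA1, hAub⟩ : ∃ A : ℝ, 0 < A ∧ A < 1 ∧
      ∀ n ∈ Finset.Icc 1 N, a n ≤ A := by
    refine ⟨(Finset.Icc 1 N).sup' ⟨1, h1N⟩ a, ?_, ?_, ?_⟩
    · exact lt_of_lt_of_le (ha 1 h1N).1 (Finset.le_sup' a h1N)
    · apply (Finset.sup'_lt_iff ..).2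
      intro b hb; exact (ha b hb).2
    · intro n hn; exact Finset.le_sup' a hn
  obtain ⟨gap, hgap0, hgaple⟩ : ∃ gap : ℝ, 0 < gap ∧
      ∀ n ∈ Finset.Icc 1 N, gap ≤ x n - x (n - 1) := by
    refine ⟨(Finset.Icc 1 N).inf' ⟨1, h1N⟩ (fun n => x n - x (n - 1)), ?_, ?_⟩
    · apply (Finset.lt_inf'_iff ..).2
      intro b hb
      obtain ⟨hb1, hb2⟩ := Finset.mem_Icc.mp hb
      have := hxlt (b - 1) b (by omega) hb2
      linarith
    · intro n hn; exact Finset.inf'_le _ hn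
  -- the bounding box
  set X : ℝ := max |x 0| |x N| with hXdef
  have hXb : ∀ t ∈ Icc (x 0) (x N), |t| ≤ X := by
    intro t ht
    rw [abs_le]
    constructor
    · have : -|x 0| ≤ x 0 := neg_abs_le _
      have h2 : |x 0| ≤ X := le_max_left _ _
      linarith [ht.1]
    · have : x N ≤ |x N| := le_abs_self _
      have h2 : |x N| ≤ X := le_max_right _ _
      linarith [ht.2]
  obtain ⟨B, hB0, hyB, hBinv⟩ : ∃ B : ℝ, 0 ≤ B ∧ (∀ i ≤ N, |y i| ≤ B) ∧
      E * X + c * B + F ≤ B := by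
    set By : ℝ := (Finset.Icc 0 N).sup' ⟨0, by simp⟩ (fun i => |y i|) with hBydef
    have hBy : ∀ i ≤ N, |y i| ≤ By := fun i hi =>
      Finset.le_sup' (fun i => |y i|) (Finset.mem_Icc.mpr ⟨Nat.zero_le _, hi⟩)
    have hBy0 : 0 ≤ By := le_trans (abs_nonneg _) (hBy 0 (Nat.zero_le _))
    refine ⟨max By ((E * X + F) / (1 - c)), le_trans hBy0 (le_max_left _ _),
      fun i hi => le_trans (hBy i hi) (le_max_left _ _), ?_⟩
    have h1 : (E * X + F) / (1 - c) ≤ max By ((E * X + F) / (1 - c)) := le_max_right _ _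
    have hc1' : 0 < 1 - c := by linarith
    rw [div_le_iff₀ hc1'] at h1
    nlinarith [le_max_left By ((E * X + F) / (1 - c)), hc0]
  -- basic facts about the maps ω
  have hω1 : ∀ n κ q, (ω n κ q).1 = a n * q.1 + bcoef n := by
    intro n κ q; rw [hω]; simp [hL]
  have hω2 : ∀ n κ q, (ω n κ q).2 = e n κ * q.1 + γ n κ * q.2 + f n κ := by
    intro n κ q; rw [hω]
  have hLmem : ∀ n ∈ Finset.Icc 1 N, ∀ t ∈ Icc (x 0) (x N),
      a n * t + bcoef n ∈ Icc (x (n - 1)) (x n) := by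
    intro n hn t ht
    have han := ha n hn
    have h0 := hL0 n hn
    have hNn := hLN n hn
    rw [hL] at h0 hNn
    constructor
    · nlinarith [ht.1, han.1]
    · nlinarith [ht.2, han.1]
  have hIccsub : ∀ n ∈ Finset.Icc 1 N, Icc (x (n - 1)) (x n) ⊆ Icc (x 0) (x N) := by
    intro n hn t ht
    obtain ⟨hn1, hnN⟩ := Finset.mem_Icc.mp hn
    exact ⟨le_trans (hxle 0 (n - 1) (Nat.zero_le _) (by omega)) ht.1,
      le_trans ht.2 (hxle n N hnN le_rfl)⟩
  -- the invariant compact strip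
  set K : Set (ℝ × ℝ) := Icc (x 0) (x N) ×ˢ Icc (-B) B with hKdef
  have hSK : ∀ k, S k ⊆ K := by
    intro k
    induction k with
    | zero =>
      rw [hS0]
      rintro p ⟨i, hiN, rfl⟩
      refine ⟨⟨hxle 0 i (Nat.zero_le _) hiN, hxle i N hiN le_rfl⟩, ?_⟩
      have := abs_le.mp (hyB i hiN)
      exact ⟨this.1, this.2⟩
    | succ k ih =>
      rw [hSS, hW]
      intro p hp
      simp only [Set.mem_iUnion] at hp
      obtain ⟨n, hn, q, hq, rfl⟩ := hp
      have hqK := ih hq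
      have hκ := hσ (k + 1)
      constructor
      · rw [hω1]
        exact hIccsub n hn (hLmem n hn q.1 hqK.1)
      · rw [hω2]
        have h1 : |e n (σ (k+1))| ≤ E := hEub n hn _ hκ
        have h2 : |γ n (σ (k+1))| ≤ c := hcub n hn _ hκ
        have h3 : |f n (σ (k+1))| ≤ F := hFub n hn _ hκ
        have h4 : |q.1| ≤ X := hXb q.1 hqK.1
        have h5 : |q.2| ≤ B := abs_le.mpr ⟨hqK.2.1, hqK.2.2⟩
        have key : |e n (σ (k+1)) * q.1 + γ n (σ (k+1)) * q.2 + f n (σ (k+1))| ≤ B := by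
          calc |e n (σ (k+1)) * q.1 + γ n (σ (k+1)) * q.2 + f n (σ (k+1))|
              ≤ |e n (σ (k+1)) * q.1| + |γ n (σ (k+1)) * q.2| + |f n (σ (k+1))| := abs_add_three _ _ _
            _ = |e n (σ (k+1))| * |q.1| + |γ n (σ (k+1))| * |q.2| + |f n (σ (k+1))| := by
                rw [abs_mul, abs_mul]
            _ ≤ E * X + c * B + F :=
                add_le_add (add_le_add (mul_le_mul h1 h4 (abs_nonneg _) hE0)
                  (mul_le_mul h2 h5 (abs_nonneg _) hc0)) h3
            _ ≤ B := hBinv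
        have := abs_le.mp key
        exact ⟨this.1, this.2⟩
  have hbuild : ∀ m n, n ∈ Finset.Icc 1 N → ∀ q ∈ S m, ω n (σ (m + 1)) q ∈ S (m + 1) := by
    intro m n hn q hq
    rw [hSS, hW]
    simp only [Set.mem_iUnion]
    exact ⟨n, hn, q, hq, rfl⟩
  have hdecomp : ∀ m p, p ∈ S (m + 1) →
      ∃ n ∈ Finset.Icc 1 N, ∃ q ∈ S m, p = ω n (σ (m + 1)) q := by
    intro m p hp
    rw [hSS, hW] at hp
    simp only [Set.mem_iUnion] at hp
    obtain ⟨n, hn, q, hq, h⟩ := hp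
    exact ⟨n, hn, q, hq, h.symm⟩
  have hS0S : ∀ k, S 0 ⊆ S k := by
    intro k
    induction k with
    | zero => exact subset_rfl
    | succ k ih =>
      intro p hp
      rw [hS0] at hp
      obtain ⟨i, hiN, rfl⟩ := hp
      have hx0y0 : (x 0, y 0) ∈ S k := ih (by rw [hS0]; exact ⟨0, Nat.zero_le _, rfl⟩)
      have hxNyN : (x N, y N) ∈ S k := ih (by rw [hS0]; exact ⟨N, le_rfl, rfl⟩)
      have hκ := hσ (k + 1)
      rcases Nat.eq_zero_or_pos i with h0 | hpos
      · subst h0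
        have h := hbuild k 1 h1N (x 0, y 0) hx0y0
        have heq : ω 1 (σ (k+1)) (x 0, y 0) = (x 0, y 0) := by
          have e1 : (ω 1 (σ (k+1)) (x 0, y 0)).1 = x 0 := by
            rw [hω1]
            have := hL0 1 h1N; rw [hL] at this; simpa using this
          have e2 : (ω 1 (σ (k+1)) (x 0, y 0)).2 = y 0 := by
            rw [hω2]
            have := hjoin0 1 h1N (σ (k+1)) hκ; simpa using this
          exact Prod.ext e1 e2
        rwa [heq] at h
      · have hiI : i ∈ Finset.Icc 1 N := Finset.mem_Icc.mpr ⟨hpos, hiN⟩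
        have h := hbuild k i hiI (x N, y N) hxNyN
        have heq : ω i (σ (k+1)) (x N, y N) = (x i, y i) := by
          have e1 : (ω i (σ (k+1)) (x N, y N)).1 = x i := by
            rw [hω1]
            have := hLN i hiI; rw [hL] at this; simpa using this
          have e2 : (ω i (σ (k+1)) (x N, y N)).2 = y i := by
            rw [hω2]
            exact hjoinN i hiI (σ (k+1)) hκ
          exact Prod.ext e1 e2
        rwa [heq] at h
  have hSne : ∀ k, (S k).Nonempty :=
    fun k => ⟨(x 0, y 0), hS0S k (by rw [hS0]; exact ⟨0, Nat.zero_le _, rfl⟩)⟩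
  have hKbdd : Bornology.IsBounded K :=
    (Metric.isBounded_Icc _ _).prod (Metric.isBounded_Icc _ _)
  have hfin : ∀ k, EMetric.hausdorffEdist (S k) Gσ ≠ ⊤ := fun k =>
    hausdorffEdist_ne_top_of_nonempty_of_bounded (hSne k) hGne
      (hKbdd.subset (hSK k)) hGc.isBounded
  -- contraction estimate for the vertical parts
  have hdiff : ∀ n ∈ Finset.Icc 1 N, ∀ κ ∈ Finset.Icc 1 M, ∀ u v : ℝ × ℝ,
      |(e n κ * u.1 + γ n κ * u.2 + f n κ) - (e n κ * v.1 + γ n κ * v.2 + f n κ)| ≤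
        E * |u.1 - v.1| + c * |u.2 - v.2| := by
    intro n hn κ hκ u v
    have h : (e n κ * u.1 + γ n κ * u.2 + f n κ) - (e n κ * v.1 + γ n κ * v.2 + f n κ) =
        e n κ * (u.1 - v.1) + γ n κ * (u.2 - v.2) := by ring
    rw [h]
    calc |e n κ * (u.1 - v.1) + γ n κ * (u.2 - v.2)|
        ≤ |e n κ * (u.1 - v.1)| + |γ n κ * (u.2 - v.2)| := abs_add_le _ _
      _ = |e n κ| * |u.1 - v.1| + |γ n κ| * |u.2 - v.2| := by rw [abs_mul, abs_mul]
      _ ≤ E * |u.1 - v.1| + c * |u.2 - v.2| :=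
          add_le_add (mul_le_mul_of_nonneg_right (hEub n hn κ hκ) (abs_nonneg _))
            (mul_le_mul_of_nonneg_right (hcub n hn κ hκ) (abs_nonneg _))
  -- the decaying sequence V
  have hr0 : (0:ℝ) < max c amin := lt_max_of_lt_right ham0
  have hr1 : max c amin < 1 := max_lt hc1 ham1
  obtain ⟨V, hV0, hVrec, hVlim⟩ : ∃ V : ℕ → ℝ, V 0 = 2 * B ∧
      (∀ j, E * (amin ^ (j+1) * gap) + c * V j ≤ V (j+1)) ∧
      Filter.Tendsto V Filter.atTop (nhds 0) := by
    refine ⟨fun j => (2*B + E*gap*(j:ℝ)) * (max c amin) ^ j, by simp, ?_, ?_⟩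
    · intro j
      have hpow : amin ^ (j+1) ≤ (max c amin) ^ (j+1) :=
        pow_le_pow_left₀ ham0.le (le_max_right c amin) (j+1)
      have hnn : (0:ℝ) ≤ 2*B + E*gap*(j:ℝ) := by
        have := mul_nonneg (mul_nonneg hE0 hgap0.le) (Nat.cast_nonneg j)
        linarith
      have h2 : c * ((2*B + E*gap*(j:ℝ)) * (max c amin) ^ j) ≤
          (max c amin) * ((2*B + E*gap*(j:ℝ)) * (max c amin) ^ j) :=
        mul_le_mul_of_nonneg_right (le_max_left c amin)
          (mul_nonneg hnn (pow_nonneg hr0.le j))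
      have h3 : E * (amin ^ (j+1) * gap) ≤ E * gap * (max c amin) ^ (j+1) := by
        calc E * (amin ^ (j+1) * gap) = E * gap * amin ^ (j+1) := by ring
          _ ≤ E * gap * (max c amin) ^ (j+1) :=
              mul_le_mul_of_nonneg_left hpow (mul_nonneg hE0 hgap0.le)
      calc E * (amin ^ (j+1) * gap) + c * ((2*B + E*gap*(j:ℝ)) * (max c amin) ^ j)
          ≤ E * gap * (max c amin) ^ (j+1) +
            (max c amin) * ((2*B + E*gap*(j:ℝ)) * (max c amin) ^ j) := add_le_add h3 h2
        _ = (2*B + E*gap*((j:ℝ)+1)) * (max c amin) ^ (j+1) := by ring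
        _ = (2*B + E*gap*(((j+1) : ℕ):ℝ)) * (max c amin) ^ (j+1) := by push_cast; ring
    · have hn1 : Filter.Tendsto (fun j : ℕ => (max c amin) ^ j) Filter.atTop (nhds 0) :=
        tendsto_pow_atTop_nhds_zero_of_lt_one hr0.le hr1
      have hsum : Summable (fun j : ℕ => (j:ℝ)^1 * (max c amin) ^ j) :=
        summable_pow_mul_geometric_of_norm_lt_one 1
          (by rw [Real.norm_eq_abs, abs_of_nonneg hr0.le]; exact hr1)
      have hn2 : Filter.Tendsto (fun j : ℕ => (j:ℝ) * (max c amin) ^ j)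
          Filter.atTop (nhds 0) := by simpa using hsum.tendsto_atTop_zero
      have hcomb := (hn1.const_mul (2*B)).add (hn2.const_mul (E*gap))
      have hfe : (fun j : ℕ => (2*B + E*gap*(j:ℝ)) * (max c amin) ^ j) =
          (fun j : ℕ => 2*B*((max c amin)^j) + E*gap*((j:ℝ)*(max c amin)^j)) := by
        funext j; ring
      rw [hfe]
      simpa using hcomb
  have hδ0 : ∀ j : ℕ, (0:ℝ) < amin ^ (j+1) * gap := by
    intro j; positivity
  have hgapge : ∀ j : ℕ, amin ^ (j+1) * gap ≤ gap := by
    intro j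
    nlinarith [pow_le_one₀ ham0.le ham1.le (n := j+1), hgap0, pow_nonneg ham0.le (j+1)]
  -- the key endpoint estimates
  have hmain : ∀ j : ℕ,
      (∀ m, ∀ p ∈ S (m + j), x N - p.1 < amin ^ (j+1) * gap → |p.2 - y N| ≤ V j) ∧
      (∀ m, ∀ p ∈ S (m + j), p.1 - x 0 < amin ^ (j+1) * gap → |p.2 - y 0| ≤ V j) := by
    intro j
    induction j with
    | zero =>
      constructor
      · intro m p hp _
        have h1 := (hSK m hp).2
        have h2 := abs_le.mp (hyB N le_rfl)
        rw [hV0, abs_le]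
        exact ⟨by linarith [h1.1, h2.2], by linarith [h1.2, h2.1]⟩
      · intro m p hp _
        have h1 := (hSK m hp).2
        have h2 := abs_le.mp (hyB 0 (Nat.zero_le _))
        rw [hV0, abs_le]
        exact ⟨by linarith [h1.1, h2.2], by linarith [h1.2, h2.1]⟩
    | succ j ih =>
      obtain ⟨ihR, ihL⟩ := ih
      constructor
      · intro m p hp hnear
        obtain ⟨n, hn, q, hq, hpe⟩ := hdecomp (m + j) p hp
        subst hpe
        obtain ⟨hn1, hnN⟩ := Finset.mem_Icc.mp hn
        have hκ := hσ (m + j + 1)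
        have hqK := hSK (m + j) hq
        have hpIcc : (ω n (σ (m+j+1)) q).1 ∈ Icc (x (n-1)) (x n) := by
          rw [hω1]; exact hLmem n hn q.1 hqK.1
        have hnn : n = N := by
          by_contra hne
          have h3 : x n ≤ x (N - 1) := hxle n (N-1) (by omega) (by omega)
          have h4 : gap ≤ x N - x (N - 1) := by
            have := hgaple N (Finset.mem_Icc.mpr ⟨hN, le_rfl⟩); simpa using this
          have h5 := hgapge (j+1)
          have h6 := hpIcc.2
          linarith
        rw [hnn] at hn hpIcc hnear ⊢
        have han := ha N hn
        have hxNfix : a N * x N + bcoef N = x N := by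
          have := hLN N hn; rw [hL] at this; exact this
        have hpull : x N - (ω N (σ (m+j+1)) q).1 = a N * (x N - q.1) := by
          rw [hω1]; linear_combination (-1 : ℝ) * hxNfix
        have hq1 : x N - q.1 < amin ^ (j+1) * gap := by
          have h6 : a N * (x N - q.1) < amin * (amin ^ (j+1) * gap) := by
            calc a N * (x N - q.1) = x N - (ω N (σ (m+j+1)) q).1 := hpull.symm
              _ < amin ^ (j+1+1) * gap := hnear
              _ = amin * (amin ^ (j+1) * gap) := by ring
          have h7 : amin * (amin ^ (j+1) * gap) ≤ a N * (amin ^ (j+1) * gap) :=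
            mul_le_mul_of_nonneg_right (hamle N hn) (hδ0 j).le
          exact lt_of_mul_lt_mul_left (lt_of_lt_of_le h6 h7) han.1.le
        have hq2 := ihR m q hq hq1
        have habs1 : |q.1 - x N| ≤ amin ^ (j+1) * gap := by
          rw [abs_sub_comm, abs_of_nonneg (by linarith [hqK.1.2] : (0:ℝ) ≤ x N - q.1)]
          linarith
        have hNj := hjoinN N hn (σ (m+j+1)) hκ
        have hd := hdiff N hn (σ (m+j+1)) hκ q (x N, y N)
        calc |(ω N (σ (m+j+1)) q).2 - y N|
            = |(e N (σ (m+j+1)) * q.1 + γ N (σ (m+j+1)) * q.2 + f N (σ (m+j+1))) -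
              (e N (σ (m+j+1)) * x N + γ N (σ (m+j+1)) * y N + f N (σ (m+j+1)))| := by
              rw [hω2, hNj]
          _ ≤ E * |q.1 - x N| + c * |q.2 - y N| := hd
          _ ≤ E * (amin ^ (j+1) * gap) + c * V j :=
              add_le_add (mul_le_mul_of_nonneg_left habs1 hE0)
                (mul_le_mul_of_nonneg_left hq2 hc0)
          _ ≤ V (j+1) := hVrec j
      · intro m p hp hnear
        obtain ⟨n, hn, q, hq, hpe⟩ := hdecomp (m + j) p hp
        subst hpe
        obtain ⟨hn1, hnN⟩ := Finset.mem_Icc.mp hn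
        have hκ := hσ (m + j + 1)
        have hqK := hSK (m + j) hq
        have hpIcc : (ω n (σ (m+j+1)) q).1 ∈ Icc (x (n-1)) (x n) := by
          rw [hω1]; exact hLmem n hn q.1 hqK.1
        have hnn : n = 1 := by
          by_contra hne
          have h3 : x 1 ≤ x (n - 1) := hxle 1 (n-1) (by omega) (by omega)
          have h4 : gap ≤ x 1 - x 0 := by
            have := hgaple 1 h1N; simpa using this
          have h5 := hgapge (j+1)
          have h6 := hpIcc.1
          linarith
        rw [hnn] at hn hpIcc hnear ⊢
        have han := ha 1 hn
        have hx0fix : a 1 * x 0 + bcoef 1 = x 0 := by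
          have := hL0 1 hn; rw [hL] at this; simpa using this
        have hpull : (ω 1 (σ (m+j+1)) q).1 - x 0 = a 1 * (q.1 - x 0) := by
          rw [hω1]; linear_combination hx0fix
        have hq1 : q.1 - x 0 < amin ^ (j+1) * gap := by
          have h6 : a 1 * (q.1 - x 0) < amin * (amin ^ (j+1) * gap) := by
            calc a 1 * (q.1 - x 0) = (ω 1 (σ (m+j+1)) q).1 - x 0 := hpull.symm
              _ < amin ^ (j+1+1) * gap := hnear
              _ = amin * (amin ^ (j+1) * gap) := by ring
          have h7 : amin * (amin ^ (j+1) * gap) ≤ a 1 * (amin ^ (j+1) * gap) :=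
            mul_le_mul_of_nonneg_right (hamle 1 hn) (hδ0 j).le
          exact lt_of_mul_lt_mul_left (lt_of_lt_of_le h6 h7) han.1.le
        have hq2 := ihL m q hq hq1
        have habs1 : |q.1 - x 0| ≤ amin ^ (j+1) * gap := by
          rw [abs_of_nonneg (by linarith [hqK.1.1] : (0:ℝ) ≤ q.1 - x 0)]
          linarith
        have h0j : e 1 (σ (m+j+1)) * x 0 + γ 1 (σ (m+j+1)) * y 0 + f 1 (σ (m+j+1)) = y 0 := by
          have := hjoin0 1 hn (σ (m+j+1)) hκ; simpa using this
        have hd := hdiff 1 hn (σ (m+j+1)) hκ q (x 0, y 0)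
        calc |(ω 1 (σ (m+j+1)) q).2 - y 0|
            = |(e 1 (σ (m+j+1)) * q.1 + γ 1 (σ (m+j+1)) * q.2 + f 1 (σ (m+j+1))) -
              (e 1 (σ (m+j+1)) * x 0 + γ 1 (σ (m+j+1)) * y 0 + f 1 (σ (m+j+1)))| := by
              rw [hω2, h0j]
          _ ≤ E * |q.1 - x 0| + c * |q.2 - y 0| := hd
          _ ≤ E * (amin ^ (j+1) * gap) + c * V j :=
              add_le_add (mul_le_mul_of_nonneg_left habs1 hE0)
                (mul_le_mul_of_nonneg_left hq2 hc0)
          _ ≤ V (j+1) := hVrec j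
  -- junction estimates for images
  have hhitR : ∀ j m n, n ∈ Finset.Icc 1 N → ∀ q ∈ S (m + j),
      x N - q.1 < amin ^ (j+1) * gap → |(ω n (σ (m+j+1)) q).2 - y n| ≤ V (j+1) := by
    intro j m n hn q hq hnear
    have hκ := hσ (m + j + 1)
    have hqK := hSK (m + j) hq
    have hq2 := (hmain j).1 m q hq hnear
    have habs1 : |q.1 - x N| ≤ amin ^ (j+1) * gap := by
      rw [abs_sub_comm, abs_of_nonneg (by linarith [hqK.1.2] : (0:ℝ) ≤ x N - q.1)]
      linarith
    have hNj := hjoinN n hn (σ (m+j+1)) hκ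
    have hd := hdiff n hn (σ (m+j+1)) hκ q (x N, y N)
    calc |(ω n (σ (m+j+1)) q).2 - y n|
        = |(e n (σ (m+j+1)) * q.1 + γ n (σ (m+j+1)) * q.2 + f n (σ (m+j+1))) -
          (e n (σ (m+j+1)) * x N + γ n (σ (m+j+1)) * y N + f n (σ (m+j+1)))| := by
          rw [hω2, hNj]
      _ ≤ E * |q.1 - x N| + c * |q.2 - y N| := hd
      _ ≤ E * (amin ^ (j+1) * gap) + c * V j :=
          add_le_add (mul_le_mul_of_nonneg_left habs1 hE0)
            (mul_le_mul_of_nonneg_left hq2 hc0)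
      _ ≤ V (j+1) := hVrec j
  have hhitL : ∀ j m n, n ∈ Finset.Icc 1 N → ∀ q ∈ S (m + j),
      q.1 - x 0 < amin ^ (j+1) * gap → |(ω n (σ (m+j+1)) q).2 - y (n-1)| ≤ V (j+1) := by
    intro j m n hn q hq hnear
    have hκ := hσ (m + j + 1)
    have hqK := hSK (m + j) hq
    have hq2 := (hmain j).2 m q hq hnear
    have habs1 : |q.1 - x 0| ≤ amin ^ (j+1) * gap := by
      rw [abs_of_nonneg (by linarith [hqK.1.1] : (0:ℝ) ≤ q.1 - x 0)]
      linarith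
    have h0j := hjoin0 n hn (σ (m+j+1)) hκ
    have hd := hdiff n hn (σ (m+j+1)) hκ q (x 0, y 0)
    calc |(ω n (σ (m+j+1)) q).2 - y (n-1)|
        = |(e n (σ (m+j+1)) * q.1 + γ n (σ (m+j+1)) * q.2 + f n (σ (m+j+1))) -
          (e n (σ (m+j+1)) * x 0 + γ n (σ (m+j+1)) * y 0 + f n (σ (m+j+1)))| := by
          rw [hω2, h0j]
      _ ≤ E * |q.1 - x 0| + c * |q.2 - y 0| := hd
      _ ≤ E * (amin ^ (j+1) * gap) + c * V j :=
          add_le_add (mul_le_mul_of_nonneg_left habs1 hE0)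
            (mul_le_mul_of_nonneg_left hq2 hc0)
      _ ≤ V (j+1) := hVrec j
  -- the oscillation estimate
  have hclose : ∀ j m p q, p ∈ S (m + j) → q ∈ S (m + j) →
      |p.1 - q.1| < amin ^ (j+1) * gap → |p.2 - q.2| ≤ 2 * V j := by
    intro j
    induction j with
    | zero =>
      intro m p q hp hq _
      have h1 := (hSK m hp).2
      have h2 := (hSK m hq).2
      rw [hV0, abs_le]
      exact ⟨by linarith [h1.1, h2.2], by linarith [h1.2, h2.1]⟩
    | succ j ih =>
      have key : ∀ m p q, p ∈ S (m + (j+1)) → q ∈ S (m + (j+1)) → p.1 ≤ q.1 →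
          q.1 - p.1 < amin ^ (j+1+1) * gap → |p.2 - q.2| ≤ 2 * V (j+1) := by
        intro m p q hp hq hle hlt
        obtain ⟨n, hn, p', hp', hpe⟩ := hdecomp (m + j) p hp
        obtain ⟨n', hn', q', hq', hqe⟩ := hdecomp (m + j) q hq
        subst hpe; subst hqe
        obtain ⟨hnn1, hnnN⟩ := Finset.mem_Icc.mp hn
        obtain ⟨hn'1, hn'N⟩ := Finset.mem_Icc.mp hn'
        have hκ := hσ (m + j + 1)
        have hp'K := hSK (m + j) hp'
        have hq'K := hSK (m + j) hq'
        have hpIcc : (ω n (σ (m+j+1)) p').1 ∈ Icc (x (n-1)) (x n) := by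
          rw [hω1]; exact hLmem n hn p'.1 hp'K.1
        have hqIcc : (ω n' (σ (m+j+1)) q').1 ∈ Icc (x (n'-1)) (x n') := by
          rw [hω1]; exact hLmem n' hn' q'.1 hq'K.1
        rcases lt_trichotomy n n' with hlt' | heq' | hgt'
        · -- the two points sit in adjacent cells, to the left and right of x n
          have hsucc : n' = n + 1 := by
            by_contra hne
            have h3 : x (n+1) ≤ x (n'-1) := hxle (n+1) (n'-1) (by omega) (by omega)
            have h4 : gap ≤ x (n+1) - x n := by
              have := hgaple (n+1) (Finset.mem_Icc.mpr ⟨by omega, by omega⟩)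
              simpa using this
            have h5 := hqIcc.1
            have h6 := hpIcc.2
            have h7 := hgapge (j+1)
            linarith
          rw [hsucc] at hn' hqIcc hlt hle ⊢
          have hxn_le : x n ≤ (ω (n+1) (σ (m+j+1)) q').1 := by
            have := hqIcc.1; simpa using this
          -- left point estimate
          have hxNfix : a n * x N + bcoef n = x n := by
            have := hLN n hn; rw [hL] at this; exact this
          have hpull : x n - (ω n (σ (m+j+1)) p').1 = a n * (x N - p'.1) := by
            rw [hω1]; linear_combination (-1 : ℝ) * hxNfix
          have hp'near : x N - p'.1 < amin ^ (j+1) * gap := by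
            have h6 : a n * (x N - p'.1) < amin * (amin ^ (j+1) * gap) := by
              calc a n * (x N - p'.1) = x n - (ω n (σ (m+j+1)) p').1 := hpull.symm
                _ ≤ (ω (n+1) (σ (m+j+1)) q').1 - (ω n (σ (m+j+1)) p').1 := by
                    linarith [hxn_le]
                _ < amin ^ (j+1+1) * gap := hlt
                _ = amin * (amin ^ (j+1) * gap) := by ring
            have h7 : amin * (amin ^ (j+1) * gap) ≤ a n * (amin ^ (j+1) * gap) :=
              mul_le_mul_of_nonneg_right (hamle n hn) (hδ0 j).le
            exact lt_of_mul_lt_mul_left (lt_of_lt_of_le h6 h7) (ha n hn).1.le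
          have hA := hhitR j m n hn p' hp' hp'near
          -- right point estimate
          have hx0fix : a (n+1) * x 0 + bcoef (n+1) = x n := by
            have := hL0 (n+1) hn'; rw [hL] at this; simpa using this
          have hpullq : (ω (n+1) (σ (m+j+1)) q').1 - x n = a (n+1) * (q'.1 - x 0) := by
            rw [hω1]; linear_combination hx0fix
          have hq'near : q'.1 - x 0 < amin ^ (j+1) * gap := by
            have h6 : a (n+1) * (q'.1 - x 0) < amin * (amin ^ (j+1) * gap) := by
              calc a (n+1) * (q'.1 - x 0) = (ω (n+1) (σ (m+j+1)) q').1 - x n := hpullq.symm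
                _ ≤ (ω (n+1) (σ (m+j+1)) q').1 - (ω n (σ (m+j+1)) p').1 := by
                    linarith [hpIcc.2]
                _ < amin ^ (j+1+1) * gap := hlt
                _ = amin * (amin ^ (j+1) * gap) := by ring
            have h7 : amin * (amin ^ (j+1) * gap) ≤ a (n+1) * (amin ^ (j+1) * gap) :=
              mul_le_mul_of_nonneg_right (hamle (n+1) hn') (hδ0 j).le
            exact lt_of_mul_lt_mul_left (lt_of_lt_of_le h6 h7) (ha (n+1) hn').1.le
          have hB2 := hhitL j m (n+1) hn' q' hq' hq'near
          have hB2' : |(ω (n+1) (σ (m+j+1)) q').2 - y n| ≤ V (j+1) := by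
            simpa using hB2
          calc |(ω n (σ (m+j+1)) p').2 - (ω (n+1) (σ (m+j+1)) q').2|
              ≤ |(ω n (σ (m+j+1)) p').2 - y n| + |y n - (ω (n+1) (σ (m+j+1)) q').2| :=
                abs_sub_le _ _ _
            _ ≤ V (j+1) + V (j+1) :=
                add_le_add hA (by rw [abs_sub_comm]; exact hB2')
            _ = 2 * V (j+1) := by ring
        · -- same cell
          subst heq'
          have hpq' : p'.1 ≤ q'.1 := by
            have h8 := hle
            rw [hω1, hω1] at h8
            nlinarith [(ha n hn).1]
          have hpull : (ω n (σ (m+j+1)) q').1 - (ω n (σ (m+j+1)) p').1 =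
              a n * (q'.1 - p'.1) := by
            rw [hω1, hω1]; ring
          have h6 : a n * (q'.1 - p'.1) < amin * (amin ^ (j+1) * gap) := by
            calc a n * (q'.1 - p'.1)
                = (ω n (σ (m+j+1)) q').1 - (ω n (σ (m+j+1)) p').1 := hpull.symm
              _ < amin ^ (j+1+1) * gap := hlt
              _ = amin * (amin ^ (j+1) * gap) := by ring
          have h7 : amin * (amin ^ (j+1) * gap) ≤ a n * (amin ^ (j+1) * gap) :=
            mul_le_mul_of_nonneg_right (hamle n hn) (hδ0 j).le
          have hq'p' : q'.1 - p'.1 < amin ^ (j+1) * gap :=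
            lt_of_mul_lt_mul_left (lt_of_lt_of_le h6 h7) (ha n hn).1.le
          have hcl := ih m p' q' hp' hq'
            (by rw [abs_sub_comm, abs_of_nonneg (by linarith : (0:ℝ) ≤ q'.1 - p'.1)]
                exact hq'p')
          have habs1 : |p'.1 - q'.1| ≤ amin ^ (j+1) * gap := by
            rw [abs_sub_comm, abs_of_nonneg (by linarith : (0:ℝ) ≤ q'.1 - p'.1)]
            linarith
          have hd := hdiff n hn (σ (m+j+1)) hκ p' q'
          calc |(ω n (σ (m+j+1)) p').2 - (ω n (σ (m+j+1)) q').2|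
              = |(e n (σ (m+j+1)) * p'.1 + γ n (σ (m+j+1)) * p'.2 + f n (σ (m+j+1))) -
                (e n (σ (m+j+1)) * q'.1 + γ n (σ (m+j+1)) * q'.2 + f n (σ (m+j+1)))| := by
                rw [hω2, hω2]
            _ ≤ E * |p'.1 - q'.1| + c * |p'.2 - q'.2| := hd
            _ ≤ E * (amin ^ (j+1) * gap) + c * (2 * V j) :=
                add_le_add (mul_le_mul_of_nonneg_left habs1 hE0)
                  (mul_le_mul_of_nonneg_left hcl hc0)
            _ ≤ 2 * V (j+1) := by
                have h9 := hVrec j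
                have h10 : (0:ℝ) ≤ E * (amin ^ (j+1) * gap) :=
                  mul_nonneg hE0 (hδ0 j).le
                linarith
        · -- degenerate case: both points are the junction point
          have h3 : x n' ≤ x (n-1) := hxle n' (n-1) (by omega) (by omega)
          have h4 := hpIcc.1
          have h5 := hqIcc.2
          have heq1 : (ω n (σ (m+j+1)) p').1 = x (n-1) := le_antisymm (by linarith) h4
          have heq2 : (ω n' (σ (m+j+1)) q').1 = x n' := le_antisymm h5 (by linarith)
          have heqn : n' = n - 1 := by
            by_contra hne
            have h7 : n' < n - 1 := by omega
            have := hxlt n' (n-1) h7 (by omega)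
            linarith
          have hx0fix : a n * x 0 + bcoef n = x (n-1) := by
            have := hL0 n hn; rw [hL] at this; exact this
          have hpull : (ω n (σ (m+j+1)) p').1 - x (n-1) = a n * (p'.1 - x 0) := by
            rw [hω1]; linear_combination hx0fix
          have hp0 : p'.1 - x 0 = 0 := by
            have h9 : a n * (p'.1 - x 0) = 0 := by rw [← hpull, heq1]; ring
            rcases mul_eq_zero.mp h9 with h | h
            · exact absurd h (ha n hn).1.ne'
            · exact h
          have hA := hhitL j m n hn p' hp' (by rw [hp0]; exact hδ0 j)
          have hxNfix : a n' * x N + bcoef n' = x n' := by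
            have := hLN n' hn'; rw [hL] at this; exact this
          have hpullq : x n' - (ω n' (σ (m+j+1)) q').1 = a n' * (x N - q'.1) := by
            rw [hω1]; linear_combination (-1 : ℝ) * hxNfix
          have hq0 : x N - q'.1 = 0 := by
            have h9 : a n' * (x N - q'.1) = 0 := by rw [← hpullq, heq2]; ring
            rcases mul_eq_zero.mp h9 with h | h
            · exact absurd h (ha n' hn').1.ne'
            · exact h
          have hB2 := hhitR j m n' hn' q' hq' (by rw [hq0]; exact hδ0 j)
          rw [← heqn] at hA
          calc |(ω n (σ (m+j+1)) p').2 - (ω n' (σ (m+j+1)) q').2|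
              ≤ |(ω n (σ (m+j+1)) p').2 - y n'| +
                |y n' - (ω n' (σ (m+j+1)) q').2| := abs_sub_le _ _ _
            _ ≤ V (j+1) + V (j+1) :=
                add_le_add hA (by rw [abs_sub_comm]; exact hB2)
            _ = 2 * V (j+1) := by ring
      intro m p q hp hq habs
      rcases le_total p.1 q.1 with h | h
      · refine key m p q hp hq h (lt_of_le_of_lt ?_ habs)
        rw [abs_sub_comm]; exact le_abs_self _
      · have h2 := key m q p hq hp h (lt_of_le_of_lt (le_abs_self _) habs)
        rw [abs_sub_comm]; exact h2
  -- quantitative convergence of S k to Gσ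
  have hdistSG : ∀ ε > (0:ℝ), ∃ K0 : ℕ, ∀ k ≥ K0, hausdorffDist (S k) Gσ < ε := by
    intro ε hε
    obtain ⟨K0, hK0⟩ := (Metric.tendsto_atTop.mp hlim) ε hε
    refine ⟨K0, fun k hk => ?_⟩
    have := hK0 k hk
    rw [Real.dist_eq, sub_zero] at this
    exact lt_of_le_of_lt (le_abs_self _) this
  -- Gσ is contained in the strip
  have hGK : Gσ ⊆ K := by
    intro p hp
    have hKcl : IsClosed K := (isClosed_Icc).prod isClosed_Icc
    have hKne : K.Nonempty := ⟨(x 0, y 0), ⟨le_rfl, hxIN.le⟩,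
      (abs_le.mp (hyB 0 (Nat.zero_le _))).1, (abs_le.mp (hyB 0 (Nat.zero_le _))).2⟩
    rw [hKcl.mem_iff_infDist_zero hKne]
    refine le_antisymm ?_ infDist_nonneg
    have hub : ∀ k, infDist p K ≤ hausdorffDist (S k) Gσ := by
      intro k
      have h1 : infDist p (S k) ≤ hausdorffDist Gσ (S k) :=
        infDist_le_hausdorffDist_of_mem hp
          (by rw [EMetric.hausdorffEdist_comm]; exact hfin k)
      rw [hausdorffDist_comm] at h1
      exact le_trans (infDist_le_infDist_of_subset (hSK k) (hSne k)) h1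
    exact ge_of_tendsto' hlim hub
  -- uniform functionality on Gσ
  have hGfun : ∀ ε > (0:ℝ), ∃ δ > (0:ℝ), ∀ p ∈ Gσ, ∀ q ∈ Gσ,
      |p.1 - q.1| < δ → |p.2 - q.2| ≤ ε := by
    intro ε hε
    obtain ⟨j, hj⟩ : ∃ j : ℕ, V j < ε / 8 :=
      (hVlim.eventually_lt_const (by linarith)).exists
    refine ⟨amin ^ (j+1) * gap / 2, by positivity, ?_⟩
    intro p hp q hq hpq
    set ε' : ℝ := min (amin ^ (j+1) * gap / 8) (ε / 8) with hε'def
    have hε'0 : 0 < ε' := by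
      apply lt_min
      · positivity
      · linarith
    obtain ⟨K0, hK0⟩ := hdistSG ε' hε'0
    set k : ℕ := max K0 j with hkdef
    have hd : hausdorffDist (S k) Gσ < ε' := hK0 k (le_max_left _ _)
    have hpick : ∀ u ∈ Gσ, ∃ u' ∈ S k, dist u u' < ε' := by
      intro u hu
      have h1 : infDist u (S k) ≤ hausdorffDist Gσ (S k) :=
        infDist_le_hausdorffDist_of_mem hu
          (by rw [EMetric.hausdorffEdist_comm]; exact hfin k)
      rw [hausdorffDist_comm] at h1
      exact (infDist_lt_iff (hSne k)).mp (lt_of_le_of_lt h1 hd)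
    obtain ⟨p', hp'S, hpd⟩ := hpick p hp
    obtain ⟨q', hq'S, hqd⟩ := hpick q hq
    have hmk : k = (k - j) + j := by omega
    rw [hmk] at hp'S hq'S
    have hdp1 : |p.1 - p'.1| < ε' := by
      rw [← Real.dist_eq]
      exact lt_of_le_of_lt (le_trans (le_max_left _ _) (le_of_eq Prod.dist_eq.symm)) hpd
    have hdq1 : |q.1 - q'.1| < ε' := by
      rw [← Real.dist_eq]
      exact lt_of_le_of_lt (le_trans (le_max_left _ _) (le_of_eq Prod.dist_eq.symm)) hqd
    have hdp2 : |p.2 - p'.2| < ε' := by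
      rw [← Real.dist_eq]
      exact lt_of_le_of_lt (le_trans (le_max_right _ _) (le_of_eq Prod.dist_eq.symm)) hpd
    have hdq2 : |q.2 - q'.2| < ε' := by
      rw [← Real.dist_eq]
      exact lt_of_le_of_lt (le_trans (le_max_right _ _) (le_of_eq Prod.dist_eq.symm)) hqd
    have hε'le1 : ε' ≤ amin ^ (j+1) * gap / 8 := min_le_left _ _
    have hε'le2 : ε' ≤ ε / 8 := min_le_right _ _
    have hclose1 : |p'.1 - q'.1| < amin ^ (j+1) * gap := by
      have t1 : |p'.1 - q'.1| ≤ |p'.1 - p.1| + |p.1 - q.1| + |q.1 - q'.1| := by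
        calc |p'.1 - q'.1| ≤ |p'.1 - q.1| + |q.1 - q'.1| := abs_sub_le _ _ _
          _ ≤ (|p'.1 - p.1| + |p.1 - q.1|) + |q.1 - q'.1| :=
              add_le_add_left (abs_sub_le _ _ _) _
      have t2 : |p'.1 - p.1| < ε' := by rw [abs_sub_comm]; exact hdp1
      have t3 : |q.1 - q'.1| < ε' := hdq1
      linarith
    have hvert := hclose j (k - j) p' q' hp'S hq'S hclose1
    have t4 : |p.2 - q.2| ≤ |p.2 - p'.2| + |p'.2 - q'.2| + |q'.2 - q.2| := by
      calc |p.2 - q.2| ≤ |p.2 - q'.2| + |q'.2 - q.2| := abs_sub_le _ _ _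
        _ ≤ (|p.2 - p'.2| + |p'.2 - q'.2|) + |q'.2 - q.2| :=
            add_le_add_left (abs_sub_le _ _ _) _
    have t5 : |q'.2 - q.2| < ε' := by rw [abs_sub_comm]; exact hdq2
    linarith
  -- the interpolation points lie on the attractor
  have hgrid : ∀ n ≤ N, (x n, y n) ∈ Gσ := by
    intro n hn
    have hmem : ∀ k, (x n, y n) ∈ S k := fun k =>
      hS0S k (by rw [hS0]; exact ⟨n, hn, rfl⟩)
    have hub : ∀ k, infDist (x n, y n) Gσ ≤ hausdorffDist (S k) Gσ := fun k =>
      infDist_le_hausdorffDist_of_mem (hmem k) (hfin k)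
    have h0 : infDist (x n, y n) Gσ ≤ 0 := ge_of_tendsto' hlim hub
    have h1 : infDist (x n, y n) Gσ = 0 := le_antisymm h0 infDist_nonneg
    have h2 : (x n, y n) ∈ closure Gσ := (mem_closure_iff_infDist_zero hGne).mpr h1
    rwa [hGc.isClosed.closure_eq] at h2
  -- surjectivity of the projection onto the interval
  have hcover : ∀ t ∈ Icc (x 0) (x N), ∃ n ∈ Finset.Icc 1 N,
      t ∈ Icc (x (n-1)) (x n) := by
    have haux : ∀ jj : ℕ, 1 ≤ jj → jj ≤ N → ∀ t ∈ Icc (x 0) (x jj),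
        ∃ n ∈ Finset.Icc 1 jj, t ∈ Icc (x (n-1)) (x n) := by
      intro jj
      induction jj with
      | zero => omega
      | succ jj ih =>
        intro _ hjjN t ht
        rcases Nat.eq_zero_or_pos jj with h0 | hpos
        · subst h0
          exact ⟨1, Finset.mem_Icc.mpr ⟨le_rfl, le_rfl⟩, by simpa using ht⟩
        · rcases le_total t (x jj) with hle | hge
          · obtain ⟨n, hn, hmem⟩ := ih hpos (by omega) t ⟨ht.1, hle⟩
            obtain ⟨ha1, ha2⟩ := Finset.mem_Icc.mp hn
            exact ⟨n, Finset.mem_Icc.mpr ⟨ha1, by omega⟩, hmem⟩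
          · refine ⟨jj + 1, Finset.mem_Icc.mpr ⟨by omega, le_rfl⟩, ?_⟩
            have : (jj + 1) - 1 = jj := by omega
            rw [this]
            exact ⟨hge, ht.2⟩
    exact haux N hN le_rfl
  have happrox : ∀ k : ℕ, ∀ t ∈ Icc (x 0) (x N), ∃ p ∈ S k,
      |p.1 - t| ≤ amax ^ k * (x N - x 0) := by
    intro k
    induction k with
    | zero =>
      intro t ht
      refine ⟨(x 0, y 0), by rw [hS0]; exact ⟨0, Nat.zero_le _, rfl⟩, ?_⟩
      simp only [pow_zero, one_mul]
      rw [abs_sub_comm, abs_of_nonneg (by linarith [ht.1] : (0:ℝ) ≤ t - x 0)]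
      linarith [ht.2]
    | succ k ih =>
      intro t ht
      obtain ⟨n, hn, ht'⟩ := hcover t ht
      have han := ha n hn
      obtain ⟨hnn1, hnnN⟩ := Finset.mem_Icc.mp hn
      set s : ℝ := (t - bcoef n) / a n with hsdef
      have hs : a n * s + bcoef n = t := by
        rw [hsdef]; field_simp [han.1.ne']; ring
      have h0 := hL0 n hn
      have hNn := hLN n hn
      rw [hL] at h0 hNn
      have hsI : s ∈ Icc (x 0) (x N) := by
        constructor
        · nlinarith [ht'.1, han.1]
        · nlinarith [ht'.2, han.1, hxle n N hnnN le_rfl,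
            hxle 0 (n-1) (Nat.zero_le _) (by omega : n - 1 ≤ N)]
      obtain ⟨p, hpS, hpd⟩ := ih s hsI
      refine ⟨ω n (σ (k+1)) p, hbuild k n hn p hpS, ?_⟩
      have hcalc : (ω n (σ (k+1)) p).1 - t = a n * (p.1 - s) := by
        rw [hω1]; linear_combination hs
      rw [hcalc, abs_mul, abs_of_pos han.1]
      calc a n * |p.1 - s| ≤ amax * (amax ^ k * (x N - x 0)) := by
            apply mul_le_mul (hAub n hn) hpd (abs_nonneg _) hA0.le
        _ = amax ^ (k+1) * (x N - x 0) := by ring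
  have hsurj : ∀ t ∈ Icc (x 0) (x N), ∃ yv : ℝ, (t, yv) ∈ Gσ := by
    intro t ht
    have hcont : ContinuousOn (fun p : ℝ × ℝ => |p.1 - t|) Gσ :=
      ((continuous_fst.sub continuous_const).abs).continuousOn
    obtain ⟨q0, hq0G, hq0min⟩ := hGc.exists_isMinOn hGne hcont
    have hub : ∀ k : ℕ, |q0.1 - t| ≤ hausdorffDist (S k) Gσ + amax ^ k * (x N - x 0) := by
      intro k
      by_contra hcon
      push_neg at hcon
      obtain ⟨p, hpS, hpd⟩ := happrox k t ht
      set η : ℝ := (|q0.1 - t| - (hausdorffDist (S k) Gσ + amax ^ k * (x N - x 0))) / 2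
        with hηdef
      have hη0 : 0 < η := by simp only [hηdef]; linarith
      have h1 : infDist p Gσ < hausdorffDist (S k) Gσ + η :=
        lt_of_le_of_lt (infDist_le_hausdorffDist_of_mem hpS (hfin k))
          (lt_add_of_pos_right _ hη0)
      obtain ⟨gpt, hgG, hgd⟩ := (infDist_lt_iff hGne).mp h1
      have h2 : |q0.1 - t| ≤ |gpt.1 - t| := hq0min hgG
      have h3 : |gpt.1 - t| ≤ |gpt.1 - p.1| + |p.1 - t| := abs_sub_le _ _ _
      have h4 : |gpt.1 - p.1| ≤ dist gpt p := by
        rw [← Real.dist_eq]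
        exact le_trans (le_max_left _ _) (le_of_eq Prod.dist_eq.symm)
      rw [dist_comm] at h4
      have h5 : dist p gpt < hausdorffDist (S k) Gσ + η := hgd
      simp only [hηdef] at hη0 h5 ⊢
      linarith
    have htend : Filter.Tendsto
        (fun k : ℕ => hausdorffDist (S k) Gσ + amax ^ k * (x N - x 0))
        Filter.atTop (nhds 0) := by
      have h1 := (tendsto_pow_atTop_nhds_zero_of_lt_one hA0.le hA1).mul_const (x N - x 0)
      have := hlim.add h1
      simpa using this
    have h0 : |q0.1 - t| ≤ 0 := ge_of_tendsto' htend hub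
    have h1 : q0.1 = t := by
      have := le_antisymm h0 (abs_nonneg _)
      have := abs_eq_zero.mp this
      linarith
    refine ⟨q0.2, ?_⟩
    rw [← h1]
    exact hq0G
  -- define the function g
  set g : ℝ → ℝ := fun t => if h : ∃ yv : ℝ, (t, yv) ∈ Gσ then h.choose else 0 with hgdef
  have hgmem : ∀ t ∈ Icc (x 0) (x N), (t, g t) ∈ Gσ := by
    intro t ht
    have h := hsurj t ht
    simp only [hgdef, dif_pos h]
    exact h.choose_spec
  have huniq : ∀ t z : ℝ, (t, z) ∈ Gσ → z = g t := by
    intro t z hz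
    have htI : t ∈ Icc (x 0) (x N) := (hGK hz).1
    have hgz := hgmem t htI
    have hzero : ∀ ε > (0:ℝ), |z - g t| ≤ ε := by
      intro ε hε
      obtain ⟨δ, hδ0', hδ⟩ := hGfun ε hε
      have := hδ (t, z) hz (t, g t) hgz (by simpa using hδ0')
      simpa using this
    have habs : |z - g t| ≤ 0 := by
      by_contra hcon
      push_neg at hcon
      have := hzero (|z - g t| / 2) (by linarith)
      linarith
    have := le_antisymm habs (abs_nonneg _)
    have := abs_eq_zero.mp this
    linarith
  refine ⟨g, ?_, ?_, ?_⟩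
  · -- continuity
    rw [Metric.continuousOn_iff]
    intro b hb ε hε
    obtain ⟨δ, hδ0', hδ⟩ := hGfun (ε/2) (by linarith)
    refine ⟨δ, hδ0', ?_⟩
    intro t ht hdist
    have h1 := hδ (t, g t) (hgmem t ht) (b, g b) (hgmem b hb)
      (by simpa [Real.dist_eq] using hdist)
    rw [Real.dist_eq]
    calc |g t - g b| ≤ ε / 2 := by simpa using h1
      _ < ε := by linarith
  · -- Gσ is the graph of g
    ext p
    constructor
    · intro hp
      refine ⟨(hGK hp).1, ?_⟩
      have := huniq p.1 p.2 (by rwa [Prod.mk.eta])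
      exact this
    · rintro ⟨hp1, hp2⟩
      have := hgmem p.1 hp1
      rw [← hp2] at this
      rwa [Prod.mk.eta] at this
  · -- interpolation
    intro n hn
    exact (huniq (x n) (y n) (hgrid n hn)).symm
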